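/- Convolution theorem, type 1: for set functions h, s on the powerset of N, the type-1 DSFT of the covering product equals the pointwise product of the DSFTs: F(h ∗ s)_B = (F h)_B · (F s)_B for all B ⊆ N, where (h ∗ s)_A = Σ_{C∪D=A} h_C s_D and (F s)_B = Σ_{A∩B=∅} s_A. -/

import Mathlib

open Finset

def conv1 {N : Type*} [Fintype N] [DecidableEq N] (h s : Finset N → ℝ) (A : Finset N) : ℝ :=
  ∑ C ∈ (univ : Finset N).powerset, ∑ D ∈ (univ : Finset N).powerset,
    if C ∪ D = A then h C * s D else 0

def dsft1 {N : Type*} [Fintype N] [DecidableEq N] (s : Finset N → ℝ) (B : Finset N) : ℝ :=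
  ∑ A ∈ (univ : Finset N).powerset.filter (fun A => A ∩ B = ∅), s A

theorem conv_theorem_type1 {N : Type*} [Fintype N] [DecidableEq N]
    (h s : Finset N → ℝ) (B : Finset N) :
    dsft1 (conv1 h s) B = dsft1 h B * dsft1 s B := by
  unfold dsft1 conv1
  rw [Finset.sum_mul_sum, Finset.sum_comm]
  conv_rhs => rw [Finset.sum_filter]
  refine Finset.sum_congr rfl fun C hC => ?_
  conv_lhs => rw [Finset.sum_comm]
  simp only [Finset.mem_powerset] at hC
  by_cases h1 : C ∩ B = ∅
  · simp only [h1, if_true]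
    conv_rhs => rw [Finset.sum_filter]
    refine Finset.sum_congr rfl fun D hD => ?_
    simp only [Finset.mem_powerset] at hD
    rw [Finset.sum_ite_eq _ (C ∪ D) (fun _ => h C * s D)]
    simp [Finset.mem_filter, Finset.union_inter_distrib_right, Finset.union_eq_empty,
      Finset.union_subset_iff, h1, hC, hD]
  · simp only [h1, if_false]
    refine Finset.sum_eq_zero fun D hD => ?_
    rw [Finset.sum_ite_eq _ (C ∪ D) (fun _ => h C * s D)]
    simp [Finset.mem_filter, Finset.union_inter_distrib_right, Finset.union_eq_empty, h1]
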